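/- Let L be an integral domain containing a finite field F of cardinality Q = q^d, where q is a prime power and d ≥ 1. Let f ∈ L⟦X⟧ be a formal power series whose coefficients vanish outside exponents that are powers of q, i.e. f = Σ_{i≥0} a_i X^{q^i}, and suppose that f(λX) = λ·f(X) for every λ ∈ F (an identity of formal power series, equivalently a_i λ^{q^i} = λ a_i for all i ≥ 0 and all λ ∈ F). Then a_i = 0 whenever d does not divide i; that is, f = Σ_{i≥0} a_{id} X^{q^{id}}. -/

import Mathlib

lemma aux_dvd_of_pow_sub_one_dvd {q d i : ℕ} (hq : 2 ≤ q) (hd : 1 ≤ d)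
    (h : q ^ d - 1 ∣ q ^ i - 1) : d ∣ i := by
  have hr : i % d < d := Nat.mod_lt _ (by omega)
  have e1 : 1 ≤ q ^ d := Nat.one_le_pow _ _ (by omega)
  have e2 : 1 ≤ q ^ i := Nat.one_le_pow _ _ (by omega)
  have e3 : 1 ≤ q ^ (i % d) := Nat.one_le_pow _ _ (by omega)
  have hq1 : (1 : ℤ) ≤ (q : ℤ) := by exact_mod_cast (by omega : 1 ≤ q)
  have c1 : ((q ^ i - 1 : ℕ) : ℤ) = (q : ℤ) ^ i - 1 := by
    rw [Nat.cast_sub e2]; push_cast; ring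
  have c2 : ((q ^ d - 1 : ℕ) : ℤ) = (q : ℤ) ^ d - 1 := by
    rw [Nat.cast_sub e1]; push_cast; ring
  have key : (q : ℤ) ^ d - 1 ∣ (q : ℤ) ^ (i % d) - 1 := by
    have h1 : (q : ℤ) ^ d - 1 ∣ (q : ℤ) ^ (d * (i / d)) - 1 := by
      simpa [pow_mul] using sub_dvd_pow_sub_pow ((q : ℤ) ^ d) 1 (i / d)
    have h2 : (q : ℤ) ^ d - 1 ∣ (q : ℤ) ^ i - 1 := by
      rw [← c1, ← c2]; exact_mod_cast h
    have e4 : (q : ℤ) ^ i - 1 = ((q : ℤ) ^ (d * (i / d)) - 1) * (q : ℤ) ^ (i % d)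
        + ((q : ℤ) ^ (i % d) - 1) := by
      rw [sub_one_mul, ← pow_add, Nat.div_add_mod]
      ring
    have := h2.sub (h1.mul_right ((q : ℤ) ^ (i % d)))
    rw [e4] at this
    simpa using this
  have hlt : (q : ℤ) ^ (i % d) - 1 < (q : ℤ) ^ d - 1 := by
    have : (q : ℤ) ^ (i % d) < (q : ℤ) ^ d :=
      pow_lt_pow_right₀ (by exact_mod_cast hq) hr
    omega
  have hge : (0 : ℤ) ≤ (q : ℤ) ^ (i % d) - 1 := by
    have : (1 : ℤ) ≤ (q : ℤ) ^ (i % d) := one_le_pow₀ hq1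
    omega
  have hzero : (q : ℤ) ^ (i % d) - 1 = 0 := by
    by_contra hne
    have hpos : 0 < (q : ℤ) ^ (i % d) - 1 := lt_of_le_of_ne hge (Ne.symm hne)
    have := Int.le_of_dvd hpos key
    omega
  have h5 : q ^ (i % d) = 1 := by exact_mod_cast (by omega : ((q : ℤ)) ^ (i % d) = 1)
  have : i % d = 0 := by
    by_contra hne
    have : q ^ (i % d) ≥ q := Nat.le_self_pow hne q
    omega
  exact Nat.dvd_of_mod_eq_zero this

/-- Let `L` be an integral domain containing a finite field `F` of cardinality
`Q = q^d` (`q` a prime power, `d ≥ 1`).  If `f ∈ L⟦X⟧` is supported on exponents that are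
powers of `q`, i.e. `f = Σ_{i≥0} a_i X^{q^i}`, and `f(λX) = λ·f(X)` for every `λ ∈ F`, then
`a_i = 0` whenever `d ∤ i`; that is, `f = Σ_{i≥0} a_{id} X^{q^{id}}`. -/
theorem F_linear_power_series_supported_on_qd_powers
    {L : Type*} [CommRing L] [IsDomain L]
    (p q : ℕ) (hp : p.Prime) (m : ℕ) (hm : 0 < m) (hq : q = p ^ m)
    (d : ℕ) (hd : 1 ≤ d)
    {F : Type*} [Field F] [Fintype F] (hcard : Fintype.card F = q ^ d)
    (ι : F →+* L)
    (f : PowerSeries L)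
    (hsupp : ∀ n : ℕ, (∀ i : ℕ, n ≠ q ^ i) → PowerSeries.coeff n f = 0)
    (hlin : ∀ a : F, PowerSeries.rescale (ι a) f = PowerSeries.C (ι a) * f) :
    ∀ i : ℕ, ¬ d ∣ i → PowerSeries.coeff (q ^ i) f = 0 := by
  intro i hdi
  by_contra ha
  have hq2 : 2 ≤ q := by
    rw [hq]; calc 2 ≤ p := hp.two_le
    _ ≤ p ^ m := Nat.le_self_pow (by omega) p
  -- From the linearity hypothesis, every λ : F satisfies λ ^ q^i = λ.
  have hfix : ∀ a : F, a ^ (q ^ i) = a := by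
    intro a
    have := congrArg (PowerSeries.coeff (q ^ i)) (hlin a)
    rw [PowerSeries.coeff_rescale, PowerSeries.coeff_C_mul] at this
    have h2 : ι a ^ (q ^ i) = ι a := mul_right_cancel₀ ha this
    apply ι.injective
    rw [map_pow]; exact h2
  -- A generator of the cyclic group Fˣ.
  obtain ⟨g, hg⟩ := IsCyclic.exists_generator (α := Fˣ)
  have horder : orderOf g = q ^ d - 1 := by
    rw [orderOf_eq_card_of_forall_mem_zpowers hg, Nat.card_units, Nat.card_eq_fintype_card, hcard]
  have hgfix : g ^ (q ^ i) = g := by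
    ext
    push_cast
    exact hfix g
  have hdvd : orderOf g ∣ q ^ i - 1 := by
    apply orderOf_dvd_of_pow_eq_one
    have h1 : (1 : ℕ) ≤ q ^ i := Nat.one_le_pow _ _ (by omega)
    have : g ^ (q ^ i - 1) * g = g := by
      rw [← pow_succ, Nat.sub_add_cancel h1, hgfix]
    calc g ^ (q ^ i - 1) = g ^ (q ^ i - 1) * g * g⁻¹ := by group
    _ = g * g⁻¹ := by rw [this]
    _ = 1 := mul_inv_cancel g
  rw [horder] at hdvd
  exact hdi (aux_dvd_of_pow_sub_one_dvd hq2 hd hdvd)
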